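/- Let J₀ be a two-sided p-periodic Jacobi matrix with discriminant Δ_{J₀}, and let J = J(a,b) and J' = J(a',b') be two-sided Jacobi operators. Let k ≤ ℓ ≤ k + p be integers and set α := ⌊(p − (ℓ − k))/2⌋. If b_j = b'_j for all j with k − α ≤ j ≤ ℓ + α and a_j = a'_j for all j with k − α ≤ j ≤ ℓ + α − 1, then ⟨δ_k, Δ_{J₀}(J) δ_ℓ⟩ = ⟨δ_k, Δ_{J₀}(J') δ_ℓ⟩. In other words, the (k,ℓ) matrix entry of Δ_{J₀}(J) depends only on {b_j}_{j=k−α}^{ℓ+α} and {a_j}_{j=k−α}^{ℓ+α−1}. -/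

import Mathlib

open scoped ComplexConjugate

noncomputable section

/-- The two-sided Hilbert space `ℓ²(ℤ)`. -/
abbrev HZ : Type := lp (fun _ : ℤ => ℂ) 2

/-- The standard orthonormal basis vectors. -/
def deltaZ (k : ℤ) : HZ := lp.single 2 k 1

/-- Matrix entries `A_{kℓ} = ⟨δ_k, A δ_ℓ⟩`. -/
def entryZ (A : HZ →L[ℂ] HZ) (k l : ℤ) : ℂ := inner ℂ (deltaZ k) (A (deltaZ l))

/-- The transfer matrix `Λ_n(x) = (1/a_n)·[[x − b_n, −1], [a_n², 0]]`. -/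
def lamMat (a b : ℤ → ℝ) (n : ℤ) : Matrix (Fin 2) (Fin 2) (Polynomial ℝ) :=
  Polynomial.C (a n)⁻¹ • !![Polynomial.X - Polynomial.C (b n), -1;
    Polynomial.C ((a n) ^ 2), 0]

/-- The ordered product `Λ_n ⋯ Λ_2 Λ_1`. -/
def tMat (a b : ℤ → ℝ) : ℕ → Matrix (Fin 2) (Fin 2) (Polynomial ℝ)
  | 0 => 1
  | n + 1 => lamMat a b ((n : ℤ) + 1) * tMat a b n

/-- The discriminant `Δ_{(a,b)}(x) = Tr(Λ_p(x) ⋯ Λ_1(x))`. -/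
def disc (a b : ℤ → ℝ) (p : ℕ) : Polynomial ℝ := Matrix.trace (tMat a b p)

/-- Evaluation of a real polynomial at a bounded operator. -/
def polyOp (q : Polynomial ℝ) (A : HZ →L[ℂ] HZ) : HZ →L[ℂ] HZ :=
  Polynomial.aeval A (q.map (algebraMap ℝ ℂ))

/- ### Auxiliary lemmas -/

lemma deltaZ_apply (k n : ℤ) : (deltaZ k : ∀ _ : ℤ, ℂ) n = if n = k then 1 else 0 := by
  classical
  simp [deltaZ, lp.single_apply, Pi.single_apply]

lemma inner_deltaZ (k : ℤ) (v : HZ) : (inner ℂ (deltaZ k) v : ℂ) = v k := by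
  classical
  simpa [deltaZ] using lp.inner_single_left (𝕜 := ℂ) (G := fun _ : ℤ => ℂ) k (1 : ℂ) v

/-- Support lemma: coordinates of `J^m δ_l` vanish outside distance `m`. -/
lemma supp_lemma (a b : ℤ → ℝ) (J : HZ →L[ℂ] HZ)
    (hJ : ∀ (u : HZ) (n : ℤ),
      (J u) n = (a (n - 1) : ℂ) * u (n - 1) + (b n : ℂ) * u n + (a n : ℂ) * u (n + 1)) :
    ∀ m : ℕ, ∀ k l : ℤ, (k + m < l ∨ l + m < k) → ((J ^ m) (deltaZ l)) k = 0 := by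
  intro m
  induction m with
  | zero =>
    intro k l h
    simp only [pow_zero, ContinuousLinearMap.one_apply]
    rw [deltaZ_apply]
    have : k ≠ l := by omega
    simp [this]
  | succ m ih =>
    intro k l h
    rw [pow_succ', ContinuousLinearMap.mul_apply, hJ]
    rw [ih (k - 1) l (by push_cast at h ⊢; omega), ih k l (by push_cast at h ⊢; omega),
      ih (k + 1) l (by push_cast at h ⊢; omega)]
    ring

/-- Key locality lemma. -/
lemma key_lemma (a b a' b' : ℤ → ℝ) (J J' : HZ →L[ℂ] HZ)
    (hJ : ∀ (u : HZ) (n : ℤ),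
      (J u) n = (a (n - 1) : ℂ) * u (n - 1) + (b n : ℂ) * u n + (a n : ℂ) * u (n + 1))
    (hJ' : ∀ (u : HZ) (n : ℤ),
      (J' u) n = (a' (n - 1) : ℂ) * u (n - 1) + (b' n : ℂ) * u n + (a' n : ℂ) * u (n + 1)) :
    ∀ m : ℕ, ∀ k l : ℤ,
      (∀ j : ℤ, k + l - m ≤ 2 * j → 2 * j ≤ k + l + m → b j = b' j) →
      (∀ j : ℤ, k + l - m ≤ 2 * j → 2 * j ≤ k + l + m - 2 → a j = a' j) →
      ((J ^ m) (deltaZ l)) k = ((J' ^ m) (deltaZ l)) k := by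
  intro m
  induction m with
  | zero => intro k l _ _; simp
  | succ m ih =>
    intro k l Hb Ha
    rw [pow_succ', ContinuousLinearMap.mul_apply, hJ,
      pow_succ', ContinuousLinearMap.mul_apply, hJ']
    push_cast at Hb Ha
    have t1 : (a (k - 1) : ℂ) * ((J ^ m) (deltaZ l)) (k - 1)
        = (a' (k - 1) : ℂ) * ((J' ^ m) (deltaZ l)) (k - 1) := by
      by_cases hc : l ≤ k + m - 1 ∧ k ≤ l + m + 1
      · rw [Ha (k - 1) (by omega) (by omega),
          ih (k - 1) l (fun j h1 h2 => Hb j (by omega) (by omega))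
            (fun j h1 h2 => Ha j (by omega) (by omega))]
      · rw [supp_lemma a b J hJ m (k - 1) l (by omega),
          supp_lemma a' b' J' hJ' m (k - 1) l (by omega), mul_zero, mul_zero]
    have t2 : (b k : ℂ) * ((J ^ m) (deltaZ l)) k
        = (b' k : ℂ) * ((J' ^ m) (deltaZ l)) k := by
      by_cases hc : l ≤ k + m + 1 ∧ k ≤ l + m + 1
      · rw [Hb k (by omega) (by omega),
          ih k l (fun j h1 h2 => Hb j (by omega) (by omega))
            (fun j h1 h2 => Ha j (by omega) (by omega))]
      · rw [supp_lemma a b J hJ m k l (by omega),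
          supp_lemma a' b' J' hJ' m k l (by omega), mul_zero, mul_zero]
    have t3 : (a k : ℂ) * ((J ^ m) (deltaZ l)) (k + 1)
        = (a' k : ℂ) * ((J' ^ m) (deltaZ l)) (k + 1) := by
      by_cases hc : l - m - 1 ≤ k ∧ k ≤ l + m - 1
      · rw [Ha k (by omega) (by omega),
          ih (k + 1) l (fun j h1 h2 => Hb j (by omega) (by omega))
            (fun j h1 h2 => Ha j (by omega) (by omega))]
      · rw [supp_lemma a b J hJ m (k + 1) l (by omega),
          supp_lemma a' b' J' hJ' m (k + 1) l (by omega), mul_zero, mul_zero]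
    rw [t1, t2, t3]

lemma tMat_natDegree_le (a b : ℤ → ℝ) : ∀ n : ℕ, ∀ i j : Fin 2,
    (tMat a b n i j).natDegree ≤ n := by
  intro n
  induction n with
  | zero =>
    intro i j
    fin_cases i <;> fin_cases j <;>
      simp [tMat, Matrix.one_apply]
  | succ n ih =>
    intro i j
    have hlam : ∀ i j : Fin 2, (lamMat a b ((n : ℤ) + 1) i j).natDegree ≤ 1 := by
      intro i j
      fin_cases i <;> fin_cases j <;>
        · simp only [lamMat, Matrix.smul_apply, Matrix.cons_val', Matrix.cons_val_zero,
            Matrix.cons_val_one, Matrix.head_cons, Matrix.empty_val', Matrix.cons_val_fin_one,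
            Matrix.head_fin_const, smul_eq_mul]
          refine Polynomial.natDegree_mul_le.trans ?_
          simp [Polynomial.natDegree_X_sub_C]
    show ((lamMat a b ((n : ℤ) + 1) * tMat a b n) i j).natDegree ≤ n + 1
    rw [Matrix.mul_apply]
    refine Polynomial.natDegree_sum_le_of_forall_le _ _ (fun c _ => ?_)
    exact Polynomial.natDegree_mul_le.trans
      (by have := hlam i c; have := ih c j; omega)

lemma disc_natDegree_le (a b : ℤ → ℝ) (p : ℕ) : (disc a b p).natDegree ≤ p := by
  unfold disc Matrix.trace
  exact Polynomial.natDegree_sum_le_of_forall_le _ _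
    (fun i _ => tMat_natDegree_le a b p i i)

/-- the `(k,ℓ)` matrix entry of `Δ_{J₀}(J)` depends only on
`{b_j}_{j=k−α}^{ℓ+α}` and `{a_j}_{j=k−α}^{ℓ+α−1}`, where `α = ⌊(p−(ℓ−k))/2⌋`. -/
theorem statement15 (p : ℕ) (hp : 1 ≤ p)
    (a0 b0 : ℤ → ℝ) (ha0pos : ∀ n, 0 < a0 n)
    (hpera : Function.Periodic a0 (p : ℤ)) (hperb : Function.Periodic b0 (p : ℤ))
    (a b a' b' : ℤ → ℝ)
    (hbdd : ∃ C : ℝ, ∀ n : ℤ, |a n| ≤ C ∧ |b n| ≤ C)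
    (hbdd' : ∃ C : ℝ, ∀ n : ℤ, |a' n| ≤ C ∧ |b' n| ≤ C)
    (hpos : ∀ n, 0 < a n) (hpos' : ∀ n, 0 < a' n)
    (J : HZ →L[ℂ] HZ)
    (hJ : ∀ (u : HZ) (n : ℤ),
      (J u) n = (a (n - 1) : ℂ) * u (n - 1) + (b n : ℂ) * u n + (a n : ℂ) * u (n + 1))
    (J' : HZ →L[ℂ] HZ)
    (hJ' : ∀ (u : HZ) (n : ℤ),
      (J' u) n = (a' (n - 1) : ℂ) * u (n - 1) + (b' n : ℂ) * u n + (a' n : ℂ) * u (n + 1))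
    (k l : ℤ) (hkl : k ≤ l) (hlk : l ≤ k + p)
    (hbeq : ∀ j : ℤ, k - (p - (l - k)) / 2 ≤ j → j ≤ l + (p - (l - k)) / 2 → b j = b' j)
    (haeq : ∀ j : ℤ, k - (p - (l - k)) / 2 ≤ j → j ≤ l + (p - (l - k)) / 2 - 1 → a j = a' j) :
    entryZ (polyOp (disc a0 b0 p) J) k l = entryZ (polyOp (disc a0 b0 p) J') k l := by
  set q : Polynomial ℂ := (disc a0 b0 p).map (algebraMap ℝ ℂ) with hq
  have hdeg : q.natDegree < p + 1 := by
    have h1 : q.natDegree ≤ p := by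
      rw [hq]
      exact Polynomial.natDegree_map_le.trans (disc_natDegree_le a0 b0 p)
    omega
  have hsum : ∀ (A : HZ →L[ℂ] HZ), polyOp (disc a0 b0 p) A
      = ∑ i ∈ Finset.range (p + 1), q.coeff i • A ^ i := fun A =>
    Polynomial.aeval_eq_sum_range' hdeg A
  rw [entryZ, entryZ, hsum J, hsum J']
  simp only [ContinuousLinearMap.sum_apply, ContinuousLinearMap.smul_apply, inner_sum,
    inner_smul_right, inner_deltaZ]
  refine Finset.sum_congr rfl (fun i hi => ?_)
  have hip : i ≤ p := by simpa using Nat.lt_succ_iff.mp (Finset.mem_range.mp hi)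
  congr 1
  refine key_lemma a b a' b' J J' hJ hJ' i k l ?_ ?_
  · intro j h1 h2
    refine hbeq j ?_ ?_ <;> [skip; skip] <;>
      · have : (i : ℤ) ≤ p := by exact_mod_cast hip
        omega
  · intro j h1 h2
    refine haeq j ?_ ?_ <;>
      · have : (i : ℤ) ≤ p := by exact_mod_cast hip
        omega
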